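/- Every pure shifted ordered complex is order-decomposable. -/

import Mathlib

namespace OrderedComplexes

variable {α : Type*} [DecidableEq α]

/-- A (downward closed) simplicial complex, as a finite set of faces. -/
def IsComplex (S : Finset (Finset α)) : Prop := ∀ σ ∈ S, ∀ τ ⊆ σ, τ ∈ S

/-- `σ` is a facet (maximal face) of the complex `S`. -/
def IsFacet (S : Finset (Finset α)) (σ : Finset α) : Prop :=
  σ ∈ S ∧ ∀ τ ∈ S, σ ⊆ τ → σ = τ

/-- A complex is pure if all of its facets have the same cardinality. -/
def IsPure (S : Finset (Finset α)) : Prop :=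
  ∀ σ τ, IsFacet S σ → IsFacet S τ → σ.card = τ.card

/-- The restriction `Σ|T = {σ ∈ Σ : σ ⊆ T}`. -/
def restrictC (S : Finset (Finset α)) (T : Finset α) : Finset (Finset α) :=
  S.filter (· ⊆ T)

/-- The link of `τ` in `Σ`: `{ρ ∈ Σ : ρ ∩ τ = ∅ and ρ ∪ τ ∈ Σ}`. -/
def linkC (S : Finset (Finset α)) (τ : Finset α) : Finset (Finset α) :=
  S.filter fun ρ => Disjoint ρ τ ∧ ρ ∪ τ ∈ S

/-- The lexicographically smallest (with respect to the linear order `w`, encoded as a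
duplicate-free list) facet of the complex `S`, computed greedily along `w`. -/
def lexMinFacet (w : List α) (S : Finset (Finset α)) : Finset α :=
  w.foldl (fun τ a => if insert a τ ∈ S then insert a τ else τ) ∅

/-- The contraction `Σ/A`: the link in `Σ` of the lexicographically smallest facet of the
restriction `Σ|A`. -/
def contractC (w : List α) (S : Finset (Finset α)) (A : Finset α) : Finset (Finset α) :=
  linkC S (lexMinFacet w (restrictC S A))

/-- An ordered complex: a linear order `w` on a finite ground set (a duplicate-free list)
together with a simplicial complex whose faces are subsets of the ground set. -/
def IsOrderedComplex (w : List α) (S : Finset (Finset α)) : Prop :=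
  w.Nodup ∧ (∀ σ ∈ S, σ ⊆ w.toFinset) ∧ IsComplex S

/-- The join of two complexes: `{σ₁ ∪ σ₂ : σ₁ ∈ Σ₁, σ₂ ∈ Σ₂}`. -/
def joinC (S₁ S₂ : Finset (Finset α)) : Finset (Finset α) :=
  (S₁ ×ˢ S₂).image fun p => p.1 ∪ p.2

/-- `w` is a shuffle of the linear orders `w₁` and `w₂`: a linear order on the union of the
two ground sets restricting to `wᵢ` on each. -/
def IsShuffle (w₁ w₂ w : List α) : Prop :=
  w.Nodup ∧ w.toFinset = w₁.toFinset ∪ w₂.toFinset ∧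
    w.filter (fun a => decide (a ∈ w₁.toFinset)) = w₁ ∧
    w.filter (fun a => decide (a ∈ w₂.toFinset)) = w₂

/-- A Hopf class: a class of pure ordered complexes closed under shuffled joins, and under
restriction and contraction by initial segments (with all such restrictions pure).
Here the initial segment of `w` of length `k` is `(w.take k).toFinset`, the order induced on
it is `w.take k`, and the order induced on its complement is `w.drop k`. -/
def IsHopfClass (Q : Set (List α × Finset (Finset α))) : Prop :=
  (∀ p ∈ Q, IsOrderedComplex p.1 p.2 ∧ IsPure p.2) ∧
  (∀ p₁ ∈ Q, ∀ p₂ ∈ Q, Disjoint p₁.1.toFinset p₂.1.toFinset →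
    ∀ w, IsShuffle p₁.1 p₂.1 w → (w, joinC p₁.2 p₂.2) ∈ Q) ∧
  (∀ p ∈ Q, ∀ k : ℕ,
    IsPure (restrictC p.2 (p.1.take k).toFinset) ∧
    (p.1.take k, restrictC p.2 (p.1.take k).toFinset) ∈ Q) ∧
  (∀ p ∈ Q, ∀ k : ℕ,
    (p.1.drop k, contractC p.1 p.2 (p.1.take k).toFinset) ∈ Q)

/-- Order-decomposability: either `Σ` has exactly one facet, or `Σ` is pure and for every
nonempty proper initial segment `A` of `w` both `Σ|A` and `Σ/A` are pure and (with their
induced orders) order-decomposable. -/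
inductive OrderDecomposable : List α → Finset (Finset α) → Prop
  | unique (w : List α) (S : Finset (Finset α)) (σ : Finset α)
      (hσ : IsFacet S σ) (huniq : ∀ τ, IsFacet S τ → τ = σ) :
      OrderDecomposable w S
  | pure (w : List α) (S : Finset (Finset α)) (hpure : IsPure S)
      (hres_pure : ∀ k : ℕ, 0 < k → k < w.length →
        IsPure (restrictC S (w.take k).toFinset))
      (hcon_pure : ∀ k : ℕ, 0 < k → k < w.length →
        IsPure (contractC w S (w.take k).toFinset))
      (hres : ∀ k : ℕ, 0 < k → k < w.length →
        OrderDecomposable (w.take k) (restrictC S (w.take k).toFinset))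
      (hcon : ∀ k : ℕ, 0 < k → k < w.length →
        OrderDecomposable (w.drop k) (contractC w S (w.take k).toFinset)) :
      OrderDecomposable w S


/-- An ordered complex `(w, Σ)` is shifted if replacing any vertex of a face by a smaller
vertex (with respect to `w`) yields another face. -/
def IsShifted (w : List α) (S : Finset (Finset α)) : Prop :=
  ∀ σ ∈ S, ∀ e ∈ σ, ∀ f ∈ w.toFinset, f ∉ σ →
    w.idxOf f < w.idxOf e → insert f (σ.erase e) ∈ S

/-! ### Auxiliary lemmas -/

lemma mem_restrictC {S : Finset (Finset α)} {T σ : Finset α} :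
    σ ∈ restrictC S T ↔ σ ∈ S ∧ σ ⊆ T := by simp [restrictC]

lemma mem_linkC {S : Finset (Finset α)} {τ ρ : Finset α} :
    ρ ∈ linkC S τ ↔ ρ ∈ S ∧ Disjoint ρ τ ∧ ρ ∪ τ ∈ S := by simp [linkC]

lemma exists_mem_not_mem {s t : Finset α} (h : s.card < t.card) : ∃ e ∈ t, e ∉ s := by
  by_contra hc
  push_neg at hc
  exact absurd (Finset.card_le_card hc) (by omega)

lemma exists_facet {S : Finset (Finset α)} {σ : Finset α} (hσ : σ ∈ S) :
    ∃ τ, σ ⊆ τ ∧ IsFacet S τ := by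
  obtain ⟨m, hm, hmax⟩ := Finset.exists_maximal (s := S.filter (σ ⊆ ·)) ⟨σ, by simp [hσ]⟩
  simp only [Finset.mem_filter] at hm
  refine ⟨m, hm.2, hm.1, fun τ hτ hsub => ?_⟩
  exact Finset.Subset.antisymm hsub (hmax (Finset.mem_filter.2 ⟨hτ, hm.2.trans hsub⟩) hsub)

lemma indexOf_take_eq {w : List α} {k : ℕ} {a : α} (h : a ∈ w.take k) :
    List.idxOf a w = List.idxOf a (w.take k) := by
  conv_lhs => rw [← List.take_append_drop k w]
  exact List.idxOf_append_of_mem h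

lemma indexOf_lt_of_mem_take {w : List α} {k : ℕ} {a : α} (h : a ∈ w.take k) :
    List.idxOf a w < k := by
  rw [indexOf_take_eq h]
  calc List.idxOf a (w.take k) < (w.take k).length := List.idxOf_lt_length_iff.2 h
    _ ≤ k := by rw [List.length_take]; omega

lemma le_indexOf_of_not_mem_take {w : List α} {k : ℕ} {a : α} (ha : a ∈ w)
    (h : a ∉ w.take k) : k ≤ List.idxOf a w := by
  by_cases hk : k ≤ w.length
  · have h1 : List.idxOf a w = (w.take k).length + List.idxOf a (w.drop k) := by
      conv_lhs => rw [← List.take_append_drop k w]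
      exact List.idxOf_append_of_notMem h
    rw [h1, List.length_take]
    omega
  · exact absurd (by rw [List.take_of_length_le (by omega)]; exact ha) h

lemma not_mem_take_of_mem_drop {w : List α} (hw : w.Nodup) {k : ℕ} {a : α}
    (h : a ∈ w.drop k) : a ∉ w.take k := by
  intro hc
  have hnd : (w.take k ++ w.drop k).Nodup := by rw [List.take_append_drop]; exact hw
  exact (List.nodup_append.1 hnd).2.2 a hc a h rfl

lemma indexOf_drop_eq {w : List α} (hw : w.Nodup) {k : ℕ} {a : α} (h : a ∈ w.drop k) :
    List.idxOf a w = k + List.idxOf a (w.drop k) := by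
  have ht : a ∉ w.take k := not_mem_take_of_mem_drop hw h
  have hk : k ≤ w.length := by
    by_contra hc
    rw [List.drop_eq_nil_of_le (by omega)] at h
    exact absurd h (List.not_mem_nil)
  have h1 : List.idxOf a w = (w.take k).length + List.idxOf a (w.drop k) := by
    conv_lhs => rw [← List.take_append_drop k w]
    exact List.idxOf_append_of_notMem ht
  rw [h1, List.length_take]
  omega

/-! ### Restriction -/

lemma isComplex_restrictC {S : Finset (Finset α)} (hS : IsComplex S) (T : Finset α) :
    IsComplex (restrictC S T) := by
  intro σ hσ τ hτ
  rw [mem_restrictC] at hσ ⊢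
  exact ⟨hS σ hσ.1 τ hτ, hτ.trans hσ.2⟩

lemma isOrderedComplex_restrict {w : List α} {S : Finset (Finset α)}
    (hoc : IsOrderedComplex w S) (k : ℕ) :
    IsOrderedComplex (w.take k) (restrictC S (w.take k).toFinset) :=
  ⟨(List.take_sublist k w).nodup hoc.1, fun _ hσ => (mem_restrictC.1 hσ).2,
    isComplex_restrictC hoc.2.2 _⟩

lemma isShifted_restrict {w : List α} {S : Finset (Finset α)}
    (hsh : IsShifted w S) (k : ℕ) :
    IsShifted (w.take k) (restrictC S (w.take k).toFinset) := by
  intro σ hσ e he f hf hfσ hlt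
  rw [mem_restrictC] at hσ
  rw [List.mem_toFinset] at hf
  have he' : e ∈ w.take k := by
    have := hσ.2 he
    rwa [List.mem_toFinset] at this
  have hfw : f ∈ w.toFinset := List.mem_toFinset.2 ((List.take_sublist k w).mem hf)
  have hlt' : w.idxOf f < w.idxOf e := by
    rw [indexOf_take_eq hf, indexOf_take_eq he']
    exact hlt
  have hη := hsh σ hσ.1 e he f hfw hfσ hlt'
  rw [mem_restrictC]
  refine ⟨hη, ?_⟩
  intro x hx
  rcases Finset.mem_insert.1 hx with rfl | hx
  · exact List.mem_toFinset.2 hf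
  · exact hσ.2 (Finset.erase_subset e σ hx)

lemma facet_restrict_extend {w : List α} {S : Finset (Finset α)} (hS : IsComplex S) {k : ℕ}
    {σ : Finset α} (hσ : IsFacet (restrictC S (w.take k).toFinset) σ) :
    ∃ τ, IsFacet S τ ∧ σ ⊆ τ ∧ τ ∩ (w.take k).toFinset = σ := by
  obtain ⟨hσS, hσA⟩ := mem_restrictC.1 hσ.1
  obtain ⟨τ, hστ, hτ⟩ := exists_facet hσS
  refine ⟨τ, hτ, hστ, ?_⟩
  apply Finset.Subset.antisymm
  · intro x hx
    rw [Finset.mem_inter] at hx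
    have hmem : insert x σ ∈ restrictC S (w.take k).toFinset := by
      rw [mem_restrictC]
      exact ⟨hS τ hτ.1 _ (Finset.insert_subset hx.1 hστ), Finset.insert_subset hx.2 hσA⟩
    have hins := hσ.2 _ hmem (Finset.subset_insert x σ)
    exact hins ▸ Finset.mem_insert_self x σ
  · exact Finset.subset_inter hστ hσA

lemma isPure_restrict {w : List α} {S : Finset (Finset α)}
    (hoc : IsOrderedComplex w S) (hpure : IsPure S) (hsh : IsShifted w S) (k : ℕ) :
    IsPure (restrictC S (w.take k).toFinset) := by
  obtain ⟨hw, hg, hS⟩ := hoc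
  have key : ∀ σ ρ, IsFacet (restrictC S (w.take k).toFinset) σ →
      IsFacet (restrictC S (w.take k).toFinset) ρ → ¬ σ.card < ρ.card := by
    intro σ ρ hσ hρ hlt
    obtain ⟨τ, hτ, hστ, hτA⟩ := facet_restrict_extend hS hσ
    obtain ⟨τ', hτ', hρτ', _⟩ := facet_restrict_extend hS hρ
    have hcards : σ.card < τ.card := by
      have h1 : ρ.card ≤ τ'.card := Finset.card_le_card hρτ'
      have h2 : τ'.card = τ.card := hpure _ _ hτ' hτ
      omega
    obtain ⟨e, heτ, heσ⟩ := exists_mem_not_mem hcards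
    obtain ⟨f, hfρ, hfσ⟩ := exists_mem_not_mem hlt
    have hρA : ρ ⊆ (w.take k).toFinset := (mem_restrictC.1 hρ.1).2
    have hfA : f ∈ w.take k := by
      have := hρA hfρ; rwa [List.mem_toFinset] at this
    have hfτ : f ∉ τ := by
      intro hc
      exact hfσ (hτA ▸ Finset.mem_inter.2 ⟨hc, List.mem_toFinset.2 hfA⟩)
    have heA : e ∉ w.take k := by
      intro hc
      exact heσ (hτA ▸ Finset.mem_inter.2 ⟨heτ, List.mem_toFinset.2 hc⟩)
    have hew : e ∈ w := by
      have := hg τ hτ.1 heτ; rwa [List.mem_toFinset] at this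
    have hidx : w.idxOf f < w.idxOf e :=
      lt_of_lt_of_le (indexOf_lt_of_mem_take hfA) (le_indexOf_of_not_mem_take hew heA)
    have hη := hsh τ hτ.1 e heτ f (List.mem_toFinset.2 ((List.take_sublist k w).mem hfA))
      hfτ hidx
    have hins : insert f σ ∈ restrictC S (w.take k).toFinset := by
      rw [mem_restrictC]
      constructor
      · refine hS _ hη _ ?_
        intro x hx
        rcases Finset.mem_insert.1 hx with rfl | hx
        · exact Finset.mem_insert_self x _
        · exact Finset.mem_insert_of_mem (Finset.mem_erase.2 ⟨fun h => heσ (h ▸ hx), hστ hx⟩)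
      · exact Finset.insert_subset (List.mem_toFinset.2 hfA) (mem_restrictC.1 hσ.1).2
    have := hσ.2 _ hins (Finset.subset_insert f σ)
    exact hfσ (this ▸ Finset.mem_insert_self f σ)
  intro σ ρ hσ hρ
  rcases lt_trichotomy σ.card ρ.card with h | h | h
  · exact absurd h (key σ ρ hσ hρ)
  · exact h
  · exact absurd h (key ρ σ hρ hσ)

/-! ### The greedy facet -/

lemma gfold_mem {R : Finset (Finset α)} :
    ∀ (l : List α) (t : Finset α), t ∈ R →
      l.foldl (fun τ a => if insert a τ ∈ R then insert a τ else τ) t ∈ R := by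
  intro l
  induction l with
  | nil => intro t ht; exact ht
  | cons a l ih =>
      intro t ht
      simp only [List.foldl_cons]
      split
      · exact ih _ (by assumption)
      · exact ih _ ht

lemma gfold_subset {R : Finset (Finset α)} :
    ∀ (l : List α) (t : Finset α),
      t ⊆ l.foldl (fun τ a => if insert a τ ∈ R then insert a τ else τ) t := by
  intro l
  induction l with
  | nil => intro t; exact Finset.Subset.refl t
  | cons a l ih =>
      intro t
      simp only [List.foldl_cons]
      split
      · exact (Finset.subset_insert a t).trans (ih _)
      · exact ih _

lemma gfold_max {R : Finset (Finset α)} (hR : IsComplex R) :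
    ∀ (l : List α) (t ρ : Finset α), ρ ∈ R →
      l.foldl (fun τ a => if insert a τ ∈ R then insert a τ else τ) t ⊆ ρ →
      ∀ a ∈ l, a ∈ ρ → a ∈ l.foldl (fun τ a => if insert a τ ∈ R then insert a τ else τ) t := by
  intro l
  induction l with
  | nil => intro t ρ _ _ a ha; exact absurd ha (List.not_mem_nil)
  | cons b l ih =>
      intro t ρ hρ hsub a ha haρ
      simp only [List.foldl_cons] at hsub ⊢
      rcases List.mem_cons.1 ha with rfl | hal
      · -- a = b : show it was added at this step
        have hstep : t ⊆ (if insert a t ∈ R then insert a t else t) := by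
          split
          · exact Finset.subset_insert _ _
          · exact Finset.Subset.refl _
        have htρ : t ⊆ ρ := hstep.trans ((gfold_subset l _).trans hsub)
        have : insert a t ∈ R := hR ρ hρ _ (Finset.insert_subset haρ htρ)
        rw [if_pos this] at hsub ⊢
        exact (gfold_subset l _) (Finset.mem_insert_self a t)
      · exact ih _ ρ hρ hsub a hal haρ

lemma lexMinFacet_isFacet {w : List α} {R : Finset (Finset α)} (hR : IsComplex R)
    (hg : ∀ ρ ∈ R, ρ ⊆ w.toFinset) (hne : (∅ : Finset α) ∈ R) :
    IsFacet R (lexMinFacet w R) := by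
  refine ⟨gfold_mem w ∅ hne, fun ρ hρ hsub => Finset.Subset.antisymm hsub ?_⟩
  intro a ha
  exact gfold_max hR w ∅ ρ hρ hsub a (by
    have := hg ρ hρ ha; rwa [List.mem_toFinset] at this) ha


/-! ### Contraction -/

lemma isComplex_linkC {S : Finset (Finset α)} (hS : IsComplex S) (τ : Finset α) :
    IsComplex (linkC S τ) := by
  intro ρ hρ ρ' hρ'
  obtain ⟨h1, h2, h3⟩ := mem_linkC.1 hρ
  exact mem_linkC.2 ⟨hS ρ h1 ρ' hρ', Finset.disjoint_of_subset_left hρ' h2,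
    hS _ h3 _ (Finset.union_subset_union hρ' (Finset.Subset.refl τ))⟩

lemma contract_facts {w : List α} {S : Finset (Finset α)}
    (hoc : IsOrderedComplex w S) (hpure : IsPure S) (hsh : IsShifted w S) (k : ℕ) :
    IsOrderedComplex (w.drop k) (contractC w S (w.take k).toFinset) ∧
    IsPure (contractC w S (w.take k).toFinset) ∧
    IsShifted (w.drop k) (contractC w S (w.take k).toFinset) := by
  obtain ⟨hw, hg, hS⟩ := hoc
  by_cases hne : (∅ : Finset α) ∈ S
  case neg =>
    have hSe : S = ∅ := by
      ext σ
      simp only [Finset.notMem_empty, iff_false]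
      intro hσ
      exact hne (hS σ hσ ∅ (Finset.empty_subset σ))
    subst hSe
    have hC : contractC w (∅ : Finset (Finset α)) (w.take k).toFinset = ∅ := by
      simp [contractC, linkC]
    rw [hC]
    refine ⟨⟨(List.drop_sublist k w).nodup hw, fun σ hσ => absurd hσ (Finset.notMem_empty σ),
      fun σ hσ => absurd hσ (Finset.notMem_empty σ)⟩, ?_, ?_⟩
    · intro σ τ hσ _
      exact absurd hσ.1 (Finset.notMem_empty σ)
    · intro σ hσ
      exact absurd hσ (Finset.notMem_empty σ)
  case pos =>
  set A := (w.take k).toFinset with hA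
  set τ₀ := lexMinFacet w (restrictC S A) with hτ₀def
  have hfacet : IsFacet (restrictC S A) τ₀ :=
    lexMinFacet_isFacet (isComplex_restrictC hS A)
      (fun ρ hρ => hg ρ (mem_restrictC.1 hρ).1) (mem_restrictC.2 ⟨hne, Finset.empty_subset A⟩)
  have hτA : τ₀ ⊆ A := (mem_restrictC.1 hfacet.1).2
  have hdisjA : ∀ ρ ∈ linkC S τ₀, Disjoint ρ A := by
    intro ρ hρ
    obtain ⟨hρS, hd, hu⟩ := mem_linkC.1 hρ
    rw [Finset.disjoint_left]
    intro a haρ haA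
    have hins : insert a τ₀ ∈ restrictC S A := mem_restrictC.2
      ⟨hS _ hu _ (Finset.insert_subset (Finset.mem_union_left τ₀ haρ)
        Finset.subset_union_right), Finset.insert_subset haA hτA⟩
    have heq := hfacet.2 _ hins (Finset.subset_insert a τ₀)
    exact (Finset.disjoint_left.1 hd) haρ (heq ▸ Finset.mem_insert_self a τ₀)
  have hground : ∀ ρ ∈ linkC S τ₀, ρ ⊆ (w.drop k).toFinset := by
    intro ρ hρ x hx
    have hxw : x ∈ w := by
      have := hg ρ (mem_linkC.1 hρ).1 hx
      rwa [List.mem_toFinset] at this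
    have hxA : x ∉ w.take k := fun hc =>
      Finset.disjoint_left.1 (hdisjA ρ hρ) hx (by rw [hA]; exact List.mem_toFinset.2 hc)
    rw [List.mem_toFinset]
    have hsplit : x ∈ w.take k ++ w.drop k := by rw [List.take_append_drop]; exact hxw
    rcases List.mem_append.1 hsplit with h | h
    · exact absurd h hxA
    · exact h
  have hfacetS : ∀ ρ, IsFacet (linkC S τ₀) ρ → IsFacet S (ρ ∪ τ₀) := by
    intro ρ hρ
    obtain ⟨hρS, hd, hu⟩ := mem_linkC.1 hρ.1
    refine ⟨hu, fun η hη hsub => Finset.Subset.antisymm hsub ?_⟩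
    intro x hxη
    by_cases hxA : x ∈ A
    · have hins : insert x τ₀ ∈ restrictC S A := mem_restrictC.2
        ⟨hS η hη _ (Finset.insert_subset hxη (Finset.subset_union_right.trans hsub)),
          Finset.insert_subset hxA hτA⟩
      have heq := hfacet.2 _ hins (Finset.subset_insert x τ₀)
      exact Finset.mem_union_right ρ (heq ▸ Finset.mem_insert_self x τ₀)
    · have hins : insert x ρ ∈ linkC S τ₀ := mem_linkC.2
        ⟨hS η hη _ (Finset.insert_subset hxη (Finset.subset_union_left.trans hsub)),
          Finset.disjoint_insert_left.2 ⟨fun hc => hxA (hτA hc), hd⟩,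
          hS η hη _ (by rw [Finset.insert_union]; exact Finset.insert_subset hxη hsub)⟩
      have heq := hρ.2 _ hins (Finset.subset_insert x ρ)
      exact Finset.mem_union_left τ₀ (heq ▸ Finset.mem_insert_self x ρ)
  have hPure : IsPure (linkC S τ₀) := by
    intro ρ ρ' hρ hρ'
    have h1 := hpure _ _ (hfacetS ρ hρ) (hfacetS ρ' hρ')
    have d1 : Disjoint ρ τ₀ := (mem_linkC.1 hρ.1).2.1
    have d2 : Disjoint ρ' τ₀ := (mem_linkC.1 hρ'.1).2.1
    rw [Finset.card_union_of_disjoint d1, Finset.card_union_of_disjoint d2] at h1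
    omega
  have hShift : IsShifted (w.drop k) (linkC S τ₀) := by
    intro σ hσ e he f hf hfσ hlt
    obtain ⟨hσS, hd, hu⟩ := mem_linkC.1 hσ
    rw [List.mem_toFinset] at hf
    have heD : e ∈ w.drop k := by
      have := hground σ hσ he
      rwa [List.mem_toFinset] at this
    have hfτ₀ : f ∉ τ₀ := fun hc =>
      not_mem_take_of_mem_drop hw hf (by
        have := hτA hc
        rw [hA, List.mem_toFinset] at this
        exact this)
    have hidx : w.idxOf f < w.idxOf e := by
      rw [indexOf_drop_eq hw hf, indexOf_drop_eq hw heD]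
      omega
    have heu : e ∈ σ ∪ τ₀ := Finset.mem_union_left τ₀ he
    have hfu : f ∉ σ ∪ τ₀ := fun hc => (Finset.mem_union.1 hc).elim hfσ hfτ₀
    have hη := hsh _ hu e heu f (List.mem_toFinset.2 ((List.drop_sublist k w).mem hf)) hfu hidx
    have heτ₀ : e ∉ τ₀ := Finset.disjoint_left.1 hd he
    have hkey : insert f ((σ ∪ τ₀).erase e) = insert f (σ.erase e) ∪ τ₀ := by
      rw [Finset.erase_union_distrib, Finset.erase_eq_of_notMem heτ₀, Finset.insert_union]
    rw [hkey] at hη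
    exact mem_linkC.2 ⟨hS _ hη _ Finset.subset_union_left,
      Finset.disjoint_insert_left.2 ⟨hfτ₀, Finset.disjoint_of_subset_left (Finset.erase_subset e σ) hd⟩,
      hη⟩
  rw [show contractC w S A = linkC S τ₀ from rfl]
  exact ⟨⟨(List.drop_sublist k w).nodup hw, hground, isComplex_linkC hS τ₀⟩, hPure, hShift⟩

lemma aux_main : ∀ (n : ℕ) (w : List α) (S : Finset (Finset α)), w.length ≤ n →
    IsOrderedComplex w S → IsPure S → IsShifted w S → OrderDecomposable w S := by
  intro n
  induction n with
  | zero =>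
      intro w S hlen hoc hpure hsh
      exact OrderDecomposable.pure w S hpure (fun k hk hk' => absurd hk' (by omega))
        (fun k hk hk' => absurd hk' (by omega)) (fun k hk hk' => absurd hk' (by omega))
        (fun k hk hk' => absurd hk' (by omega))
  | succ n ih =>
      intro w S hlen hoc hpure hsh
      refine OrderDecomposable.pure w S hpure
        (fun k hk hk' => isPure_restrict hoc hpure hsh k)
        (fun k hk hk' => (contract_facts hoc hpure hsh k).2.1)
        (fun k hk hk' => ih (w.take k) _ (by rw [List.length_take]; omega)
          (isOrderedComplex_restrict hoc k) (isPure_restrict hoc hpure hsh k)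
          (isShifted_restrict hsh k))
        (fun k hk hk' => ih (w.drop k) _ (by rw [List.length_drop]; omega)
          (contract_facts hoc hpure hsh k).1 (contract_facts hoc hpure hsh k).2.1
          (contract_facts hoc hpure hsh k).2.2)


/-- Every pure shifted ordered complex is order-decomposable. -/
theorem orderDecomposable_of_shifted (w : List α) (S : Finset (Finset α))
    (hoc : IsOrderedComplex w S) (hpure : IsPure S) (hshift : IsShifted w S) :
    OrderDecomposable w S :=
  aux_main w.length w S le_rfl hoc hpure hshift

end OrderedComplexes
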